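/- For any nonempty proper subequation F ⊆ Sym²(ℝⁿ), the Dirichlet dual satisfies F̃ = −∂F + P. -/

import Mathlib

open Topology Pointwise

abbrev SymMat (n : ℕ) : Type := selfAdjoint (Matrix (Fin n) (Fin n) ℝ)

def PSD (n : ℕ) : Set (SymMat n) := {A | (A : Matrix (Fin n) (Fin n) ℝ).PosSemidef}

def dual {n : ℕ} (F : Set (SymMat n)) : Set (SymMat n) := {A | -A ∉ interior F}

/-- The identity as a symmetric matrix. -/

def idS (n : ℕ) : SymMat n := ⟨1, IsSelfAdjoint.one _⟩

open scoped Matrix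

lemma psd_smul_one {n : ℕ} {t : ℝ} (ht : 0 ≤ t) :
    (t • (1 : Matrix (Fin n) (Fin n) ℝ)).PosSemidef := by
  rw [Matrix.smul_one_eq_diagonal]
  exact Matrix.PosSemidef.diagonal fun _ => ht

/-- Any symmetric real matrix plus a big multiple of the identity is PSD. -/
lemma exists_shift_psd {n : ℕ} (M : Matrix (Fin n) (Fin n) ℝ) (hM : M.IsHermitian) :
    ∃ t : ℝ, 0 ≤ t ∧ (t • (1 : Matrix (Fin n) (Fin n) ℝ) + M).PosSemidef := by
  set C : ℝ := ∑ i, ∑ j, |M i j| with hC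
  have hC0 : 0 ≤ C := Finset.sum_nonneg fun i _ =>
    Finset.sum_nonneg fun j _ => abs_nonneg _
  refine ⟨C, hC0, Matrix.posSemidef_iff_dotProduct_mulVec.mpr ⟨(psd_smul_one hC0).1.add hM, fun x => ?_⟩⟩
  have hs : ∀ k : Fin n, x k ^ 2 ≤ x ⬝ᵥ x := by
    intro k
    have : x ⬝ᵥ x = ∑ i, x i ^ 2 := by
      simp [dotProduct, sq]
    rw [this]
    exact Finset.single_le_sum (fun i _ => sq_nonneg (x i)) (Finset.mem_univ k)
  have hdot : 0 ≤ x ⬝ᵥ x := by simpa using dotProduct_star_self_nonneg x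
  have key : ∀ i j : Fin n, -( |M i j| * (x ⬝ᵥ x)) ≤ x i * (M i j * x j) := by
    intro i j
    have h1 : |x i * (M i j * x j)| ≤ |M i j| * (x ⬝ᵥ x) := by
      have : |x i * (M i j * x j)| = |M i j| * (|x i| * |x j|) := by
        rw [abs_mul, abs_mul]; ring
      rw [this]
      refine mul_le_mul_of_nonneg_left ?_ (abs_nonneg _)
      have h2 : 2 * (|x i| * |x j|) ≤ |x i| ^ 2 + |x j| ^ 2 := by
        nlinarith [sq_nonneg (|x i| - |x j|)]
      have h3 : |x i| ^ 2 + |x j| ^ 2 ≤ 2 * (x ⬝ᵥ x) := by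
        have := hs i; have := hs j
        rw [sq_abs, sq_abs]; linarith
      linarith
    linarith [neg_abs_le (x i * (M i j * x j)), h1]
  have hq : -(C * (x ⬝ᵥ x)) ≤ x ⬝ᵥ (M *ᵥ x) := by
    have : x ⬝ᵥ (M *ᵥ x) = ∑ i, ∑ j, x i * (M i j * x j) := by
      simp [dotProduct, Matrix.mulVec, Finset.mul_sum]
    rw [this, hC]
    have : -(( ∑ i, ∑ j, |M i j|) * (x ⬝ᵥ x)) = ∑ i, ∑ j, -(|M i j| * (x ⬝ᵥ x)) := by
      rw [Finset.sum_mul, ← Finset.sum_neg_distrib]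
      refine Finset.sum_congr rfl fun i _ => ?_
      rw [Finset.sum_mul, ← Finset.sum_neg_distrib]
    rw [this]
    exact Finset.sum_le_sum fun i _ => Finset.sum_le_sum fun j _ => key i j
  have expand : star x ⬝ᵥ ((C • (1 : Matrix (Fin n) (Fin n) ℝ) + M) *ᵥ x)
      = C * (x ⬝ᵥ x) + x ⬝ᵥ (M *ᵥ x) := by
    simp [Matrix.add_mulVec, Matrix.smul_mulVec, Matrix.one_mulVec,
      dotProduct_add, dotProduct_smul, smul_eq_mul, star_trivial]
  rw [expand]
  nlinarith [mul_le_mul_of_nonneg_right (le_refl C) hdot]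

theorem stmt6 (n : ℕ) (F : Set (SymMat n)) (hcl : IsClosed F)
    (hpos : F + PSD n ⊆ F) (hne : F.Nonempty) (hproper : F ≠ Set.univ) :
    dual F = -(frontier F) + PSD n := by
  -- interior is closed under adding PSD matrices
  have hint : ∀ {x : SymMat n} (Q : SymMat n), Q ∈ PSD n → x ∈ interior F →
      x + Q ∈ interior F := by
    intro x Q hQ hx
    have hopen : IsOpen ((· + Q) '' interior F) :=
      (Homeomorph.addRight Q).isOpenMap _ isOpen_interior
    have hsub : (· + Q) '' interior F ⊆ F := by
      rintro _ ⟨y, hy, rfl⟩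
      exact hpos (Set.add_mem_add (interior_subset hy) hQ)
    exact interior_maximal hsub hopen ⟨x, hx, rfl⟩
  ext A
  constructor
  · intro hA
    obtain ⟨Cf, hCf⟩ := hne
    have hMh : ((-A - Cf : SymMat n) : Matrix (Fin n) (Fin n) ℝ).IsHermitian := (-A - Cf).2
    obtain ⟨t₁, ht₁0, ht₁⟩ := exists_shift_psd _ hMh
    set f : ℝ → SymMat n := fun t => -A + t • idS n with hf
    have hcont : Continuous f := by
      rw [Topology.IsInducing.subtypeVal.continuous_iff]
      show Continuous fun t : ℝ =>
        -(A : Matrix (Fin n) (Fin n) ℝ) + t • (1 : Matrix (Fin n) (Fin n) ℝ)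
      continuity
    set S : Set ℝ := Set.Ici 0 ∩ f ⁻¹' F with hS
    have hS_closed : IsClosed S := isClosed_Ici.inter (hcl.preimage hcont)
    have ht₁S : t₁ ∈ S := by
      refine ⟨ht₁0, ?_⟩
      have hq : (t₁ • idS n + (-A - Cf) : SymMat n) ∈ PSD n := ht₁
      have : f t₁ = Cf + (t₁ • idS n + (-A - Cf)) := by
        rw [hf]; abel
      rw [Set.mem_preimage, this]
      exact hpos (Set.add_mem_add hCf hq)
    have hbdd : BddBelow S := ⟨0, fun t ht => ht.1⟩
    set t₀ : ℝ := sInf S with ht₀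
    have ht₀S : t₀ ∈ S := hS_closed.csInf_mem ⟨t₁, ht₁S⟩ hbdd
    have ht₀0 : 0 ≤ t₀ := ht₀S.1
    have hBF : f t₀ ∈ F := ht₀S.2
    have hBnotint : f t₀ ∉ interior F := by
      intro hB
      rcases eq_or_lt_of_le ht₀0 with h0 | h0
      · apply hA
        have : f t₀ = -A := by rw [hf, ← h0]; simp
        rwa [this] at hB
      · have hU : IsOpen (f ⁻¹' interior F) := isOpen_interior.preimage hcont
        obtain ⟨ε, hε, hball⟩ := Metric.isOpen_iff.mp hU t₀ hB
        set t := max 0 (t₀ - ε / 2) with htdef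
        have htlt : t < t₀ := max_lt h0 (by linarith)
        have htball : t ∈ Metric.ball t₀ ε := by
          rw [Metric.mem_ball, Real.dist_eq, abs_lt]
          constructor
          · have : t₀ - ε / 2 ≤ t := le_max_right _ _
            linarith
          · linarith
        have htint : f t ∈ interior F := hball htball
        have htS : t ∈ S := ⟨Set.mem_Ici.mpr (le_max_left _ _), Set.mem_preimage.mpr (interior_subset htint)⟩
        exact absurd (csInf_le hbdd htS) (not_le.mpr htlt)
    have hBf : f t₀ ∈ frontier F := by
      rw [hcl.frontier_eq]; exact ⟨hBF, hBnotint⟩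
    have hAeq : -(f t₀) + t₀ • idS n = A := by
      show -(-A + t₀ • idS n) + t₀ • idS n = A
      rw [neg_add, neg_neg, add_assoc, neg_add_cancel, add_zero]
    rw [← hAeq]
    exact Set.add_mem_add (Set.neg_mem_neg.mpr hBf) (psd_smul_one ht₀0)
  · intro hA
    rw [Set.mem_add] at hA
    obtain ⟨b, hb, q, hq, rfl⟩ := hA
    rw [Set.mem_neg] at hb
    intro h
    have h2 : -(b + q) + q ∈ interior F := hint q hq h
    have h3 : -(b + q) + q = -b := by abel
    rw [h3] at h2
    rw [hcl.frontier_eq] at hb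
    exact hb.2 h2
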